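/- Screening invariance of the W B_n generator: with notation as in the Fateev–Lukyanov construction, let γ_± satisfy γ_+ + γ_− = γ and γ_+γ_− = −1, and define screening operators Q_i = ∫ e^{γ_+∫α_i(z)} dz for i = 1,…,n−1 and Q_n = ∫ :e^{γ_+∫α_n(z)} Ψ(z): dz, where α_i = b_i − b_{i+1} for i < n and α_n = b_n. Then Q_i · G = 0 for all i = 1,…,n, i.e. G lies in the intersection of the kernels of the screening operators. -/

import Mathlib

open scoped BigOperators

/-- Generalized binomial coefficient `binom m j` for integer upper index `m`. -/
noncomputable def zbinom (m : ℤ) (j : ℕ) : ℂ :=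
  (∏ i ∈ Finset.range j, ((m : ℂ) - (i : ℂ))) / (Nat.factorial j : ℂ)

/-- A bare-bones vertex superalgebra: `mul n a b` is the `n`-th product `a₍ₙ₎b`, `vac`
the vacuum, `T` the translation operator and `pt` the parity (of homogeneous elements).
The axioms are the vacuum and translation axioms, skew-symmetry and the Borcherds
commutator formula. -/
structure SVA (V : Type*) [AddCommGroup V] [Module ℂ V] where
  mul : ℤ → V →ₗ[ℂ] V →ₗ[ℂ] V
  vac : V
  T : V →ₗ[ℂ] V
  pt : V → ZMod 2
  pt_vac : pt vac = 0
  pt_T : ∀ a, pt (T a) = pt a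
  trunc : ∀ a b : V, ∃ N : ℕ, ∀ n : ℤ, (N : ℤ) ≤ n → mul n a b = 0
  vac_left_neg_one : ∀ a, mul (-1) vac a = a
  vac_left : ∀ a (n : ℤ), n ≠ -1 → mul n vac a = 0
  vac_right : ∀ a, mul (-1) a vac = a
  vac_right_pos : ∀ a (n : ℤ), 0 ≤ n → mul n a vac = 0
  T_eq : ∀ a, mul (-2) a vac = T a
  T_vac : T vac = 0
  T_left : ∀ a b (n : ℤ), mul n (T a) b = (-(n : ℂ)) • mul (n - 1) a b
  T_der : ∀ a b (n : ℤ), T (mul n a b) = mul n (T a) b + mul n a (T b)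
  skew : ∀ a b (n : ℤ), mul n a b =
    ((-1 : ℂ) ^ ((pt a * pt b).val)) •
      ∑ᶠ j : ℕ, ((-1 : ℂ) ^ (n + (j : ℤ) + 1)) •
        (((Nat.factorial j : ℂ))⁻¹ • (T ^ j) (mul (n + (j : ℤ)) b a))
  comm : ∀ a b c (m n : ℤ),
    mul m a (mul n b c) - ((-1 : ℂ) ^ ((pt a * pt b).val)) • mul n b (mul m a c) =
      ∑ᶠ j : ℕ, zbinom m j • mul (m + n - (j : ℤ)) (mul (j : ℤ) a b) c

/-- `C₂(V)`: the span of all elements of the form `a₍₋₂₎c`. -/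
noncomputable def SVA.C2 {V : Type*} [AddCommGroup V] [Module ℂ V] (S : SVA V) :
    Submodule ℂ V :=
  Submodule.span ℂ {x : V | ∃ a c : V, x = S.mul (-2) a c}

/-- `FLGaux S γ b Ψ n k = :(γ∂ + b_{n-k+1}) ⋯ (γ∂ + b_n)Ψ:`. -/
noncomputable def FLGaux {V : Type*} [AddCommGroup V] [Module ℂ V] (S : SVA V)
    (γ : ℂ) (b : ℕ → V) (Ψ : V) (n : ℕ) : ℕ → V
  | 0 => Ψ
  | k + 1 => γ • S.T (FLGaux S γ b Ψ n k) + S.mul (-1) (b (n - k)) (FLGaux S γ b Ψ n k)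

/-- The Fateev–Lukyanov field `G = :(γ∂ + b₁) ⋯ (γ∂ + b_n)Ψ:`. -/
noncomputable def FLG {V : Type*} [AddCommGroup V] [Module ℂ V] (S : SVA V)
    (γ : ℂ) (b : ℕ → V) (Ψ : V) (n : ℕ) : V :=
  FLGaux S γ b Ψ n n

/-- The simple roots of type `B_n` in terms of the orthonormal fields `b_i`:
`α_i = b_i − b_{i+1}` for `i < n`, `α_n = b_n`. -/
noncomputable def Brt {V : Type*} [AddCommGroup V] [Module ℂ V]
    (b : ℕ → V) (n i : ℕ) : V :=
  if i = n then b n else b i - b (i + 1)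

section Aux
variable {V : Type*} [AddCommGroup V] [Module ℂ V] (S : SVA V)

lemma zbinom_zero_right (m : ℤ) : zbinom m 0 = 1 := by
  simp [zbinom]

namespace SVA

lemma skew' (a x : V) (h : S.pt a * S.pt x = 0) (nn : ℤ) :
    S.mul nn a x = ∑ᶠ j : ℕ, ((-1 : ℂ) ^ (nn + (j : ℤ) + 1)) •
        (((Nat.factorial j : ℂ))⁻¹ • (S.T ^ j) (S.mul (nn + (j : ℤ)) x a)) := by
  have := S.skew a x nn
  rw [h] at this
  simpa using this

lemma commL (a x y : V) (m : ℤ) (hx : S.pt x = 0)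
    (h1 : ∀ j : ℕ, 1 ≤ j → S.mul (j : ℤ) a x = 0) :
    S.mul m a (S.mul (-1) x y)
      = S.mul (-1) x (S.mul m a y) + S.mul (m - 1) (S.mul 0 a x) y := by
  have h := S.comm a x y m (-1)
  rw [hx, mul_zero] at h
  simp only [ZMod.val_zero, pow_zero, one_smul] at h
  rw [finsum_eq_single _ 0 ?side] at h
  · have : m + -1 - ((0 : ℕ) : ℤ) = m - 1 := by push_cast; ring
    rw [this, zbinom_zero_right, one_smul] at h
    simp only [Nat.cast_zero] at h
    exact sub_eq_iff_eq_add'.mp h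
  · intro j hj
    have : S.mul (j : ℤ) a x = 0 := h1 j (Nat.one_le_iff_ne_zero.mpr hj)
    rw [this]
    simp

end SVA
end Aux
section Aux2
variable {V : Type*} [AddCommGroup V] [Module ℂ V] (S : SVA V)
namespace SVA

lemma mulTright (a c : V) (m : ℤ) :
    S.mul m a (S.T c) = S.T (S.mul m a c) + (m : ℂ) • S.mul (m - 1) a c := by
  have h1 := S.T_der a c m
  have h2 := S.T_left a c m
  rw [h2] at h1
  have := sub_eq_iff_eq_add'.mpr h1
  rw [← this]; module

lemma mulT0 (a c : V) : S.mul 0 a (S.T c) = S.T (S.mul 0 a c) := by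
  rw [S.mulTright a c 0]; simp

/-- If all `x₍ₘ₎a` vanish for `m ≥ N ≥ 0`, then so do all `a₍ₘ₎x`. -/
lemma flip_ge (a x : V) (h : S.pt a * S.pt x = 0) (N : ℤ) (hN : 0 ≤ N)
    (hall : ∀ mm : ℤ, N ≤ mm → S.mul mm x a = 0) (m : ℤ) (hm : N ≤ m) :
    S.mul m a x = 0 := by
  rw [S.skew' a x h m, finsum_eq_zero_of_forall_eq_zero]
  intro j
  rw [hall (m + (j : ℤ)) (by omega)]
  simp

lemma flip_zero_eq (a x : V) (h : S.pt a * S.pt x = 0)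
    (hpos : ∀ mm : ℤ, 1 ≤ mm → S.mul mm x a = 0) :
    S.mul 0 a x = - S.mul 0 x a := by
  rw [S.skew' a x h 0, finsum_eq_single _ 0 ?side]
  · norm_num
  · intro j hj
    rw [hpos (0 + (j : ℤ)) (by omega)]
    simp

lemma flip_neg_one (a x : V) (h : S.pt a * S.pt x = 0)
    (hall : ∀ mm : ℤ, 0 ≤ mm → S.mul mm x a = 0) :
    S.mul (-1) a x = S.mul (-1) x a := by
  rw [S.skew' a x h (-1), finsum_eq_single _ 0 ?side]
  · norm_num
  · intro j hj
    rw [hall (-1 + (j : ℤ)) (by omega)]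
    simp

end SVA
end Aux2
/-- screening invariance of the `WB_n` generator: let `γ₊ + γ₋ = γ`,
`γ₊γ₋ = −1`, let `Sα i` be the screening vertex operator `e^{γ₊∫α_i(z)}` (characterized
by `∂Sα_i = γ₊ :α_i Sα_i:`, `[b_j λ Sα_i] = γ₊ (b_j|α_i) Sα_i` and `[Ψ_λ Sα_i] = 0`),
and let `G = :(γ∂+b₁)⋯(γ∂+b_n)Ψ:`.  Then the screening operators
`Q_i = ∫ Sα_i dz` (`i < n`) and `Q_n = ∫ :Sα_n Ψ: dz` kill `G`:
`(Sα_i)₍₀₎ G = 0` and `(:Sα_n Ψ:)₍₀₎ G = 0`. -/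
theorem WBn_screening_kills_G
    {V : Type*} [AddCommGroup V] [Module ℂ V] (S : SVA V)
    (n : ℕ) (hn : 1 ≤ n) (γ γp γm : ℂ) (b : ℕ → V) (Ψ : V) (Sα : ℕ → V)
    (hγ : γp + γm = γ) (hγ2 : γp * γm = -1)
    (hptb : ∀ i, S.pt (b i) = 0) (hptΨ : S.pt Ψ = 1) (hptS : ∀ i, S.pt (Sα i) = 0)
    (hbb1 : ∀ i j, S.mul 1 (b i) (b j) = (if i = j then (1 : ℂ) else 0) • S.vac)
    (hbb0 : ∀ i j, S.mul 0 (b i) (b j) = 0)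
    (hbbn : ∀ i j, ∀ m : ℤ, 2 ≤ m → S.mul m (b i) (b j) = 0)
    (hΨΨ0 : S.mul 0 Ψ Ψ = S.vac)
    (hΨΨn : ∀ m : ℤ, 1 ≤ m → S.mul m Ψ Ψ = 0)
    (hbΨ : ∀ i, ∀ m : ℤ, 0 ≤ m → S.mul m (b i) Ψ = 0)
    (hΨb : ∀ i, ∀ m : ℤ, 0 ≤ m → S.mul m Ψ (b i) = 0)
    -- `∂ Sα_i = γ₊ :α_i Sα_i:`
    (hTS : ∀ i, 1 ≤ i → i ≤ n → S.T (Sα i) = γp • S.mul (-1) (Brt b n i) (Sα i))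
    -- `[b_j λ Sα_i] = γ₊ (b_j | α_i) Sα_i` with `(b_j|α_i) = δ_{ji} − δ_{j,i+1}`
    (hbS0 : ∀ i j, 1 ≤ i → i ≤ n → 1 ≤ j → j ≤ n →
      S.mul 0 (b j) (Sα i)
        = (γp * ((if j = i then (1 : ℂ) else 0)
            - (if j = i + 1 ∧ i ≠ n then (1 : ℂ) else 0))) • Sα i)
    (hbSpos : ∀ i j, ∀ m : ℤ, 1 ≤ m → S.mul m (b j) (Sα i) = 0)
    (hΨS : ∀ i, ∀ m : ℤ, 0 ≤ m → S.mul m Ψ (Sα i) = 0) :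
    (∀ i, 1 ≤ i → i + 1 ≤ n → S.mul 0 (Sα i) (FLG S γ b Ψ n) = 0) ∧
    S.mul 0 (S.mul (-1) (Sα n) Ψ) (FLG S γ b Ψ n) = 0 := by
  classical
  set g := FLGaux S γ b Ψ n with hgdef
  have hgsucc : ∀ k, g (k+1) = γ • S.T (g k) + S.mul (-1) (b (n-k)) (g k) :=
    fun k => rfl
  -- general vanishing lemma
  have genV : ∀ (a : V) (K : ℕ),
      (∀ m : ℤ, 0 ≤ m → S.mul m a Ψ = 0) →
      (∀ t : ℕ, t < K → (∀ j : ℕ, 1 ≤ j → S.mul (j : ℤ) a (b (n - t)) = 0)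
          ∧ S.mul 0 a (b (n - t)) = 0) →
      ∀ k : ℕ, k ≤ K → ∀ m : ℤ, 0 ≤ m → S.mul m a (g k) = 0 := by
    intro a K haΨ hB k
    induction k with
    | zero => intro _ m hm; exact haΨ m hm
    | succ k ih =>
      intro hk m hm
      obtain ⟨hb1, hb0⟩ := hB k (by omega)
      have ihk := ih (by omega)
      rw [hgsucc k, map_add, map_smul,
        S.commL a (b (n-k)) (g k) m (hptb _) hb1, hb0, S.mulTright,
        ihk m hm]
      have hrest : (m : ℂ) • S.mul (m-1) a (g k) = 0 := by
        rcases eq_or_lt_of_le hm with h0 | h1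
        · rw [← h0]; simp
        · rw [ihk (m-1) (by omega), smul_zero]
      rw [hrest]
      simp
  have hsc : γ * γp - γp * γp + 1 = 0 := by linear_combination (-γp) * hγ + hγ2
  -- PART 1
  have part1 : ∀ i, 1 ≤ i → i + 1 ≤ n → S.mul 0 (Sα i) (FLG S γ b Ψ n) = 0 := by
    intro i hi1 hin
    obtain ⟨d, hd⟩ : ∃ d, n = i + 1 + d := ⟨n - (i+1), by omega⟩
    set s := Sα i with hsdef
    have hpts0 : S.pt s * S.pt (b 0) = 0 := by rw [hptS]; ring
    -- products of s with the b's, from the right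
    have hsb1 : ∀ l, ∀ j : ℕ, 1 ≤ j → S.mul (j : ℤ) s (b l) = 0 := by
      intro l j hj
      exact S.flip_ge s (b l) (by rw [hptS]; ring) 1 (by norm_num)
        (fun mm hmm => hbSpos i l mm hmm) (j : ℤ) (by exact_mod_cast hj)
    have hsb0 : ∀ l, 1 ≤ l → l ≤ n → S.mul 0 s (b l)
        = (-(γp * ((if l = i then (1:ℂ) else 0)
            - (if l = i + 1 ∧ i ≠ n then (1:ℂ) else 0)))) • s := by
      intro l hl1 hl2
      rw [S.flip_zero_eq s (b l) (by rw [hptS]; ring)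
        (fun mm hmm => hbSpos i l mm hmm), hbS0 i l hi1 (by omega) hl1 hl2,
        neg_smul]
    have hsΨ : ∀ m : ℤ, 0 ≤ m → S.mul m s Ψ = 0 := by
      intro m hm
      exact S.flip_ge s Ψ (by rw [hptS]; ring) 0 le_rfl
        (fun mm hmm => hΨS i mm hmm) m hm
    -- s kills g k for k ≤ d, in all nonneg products
    have hsg : ∀ k : ℕ, k ≤ d → ∀ m : ℤ, 0 ≤ m → S.mul m s (g k) = 0 := by
      refine genV s d hsΨ ?_
      intro t ht
      refine ⟨fun j hj => hsb1 _ j hj, ?_⟩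
      rw [hsb0 (n - t) (by omega) (by omega)]
      have h1 : ¬ (n - t = i) := by omega
      have h2 : ¬ (n - t = i + 1 ∧ i ≠ n) := by rintro ⟨h, _⟩; omega
      rw [if_neg h1, if_neg h2]
      norm_num
    -- products of b i, b (i+1) with g d from the left vanish
    have hbjg : ∀ jj, jj ≤ i + 1 → ∀ m : ℤ, 0 ≤ m → S.mul m (b jj) (g d) = 0 := by
      intro jj hjj
      refine genV (b jj) d (fun m hm => hbΨ jj m hm) ?_ d le_rfl
      intro t ht
      have hne : ¬ (jj = n - t) := by omega
      constructor
      · intro j hj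
        match j, hj with
        | 1, _ => rw [show ((1:ℕ):ℤ) = (1:ℤ) by norm_num, hbb1, if_neg hne, zero_smul]
        | (j+2), _ =>
          exact hbbn jj (n-t) (j+2 : ℕ) (by push_cast; omega)
      · exact hbb0 jj (n-t)
    -- left products of g d
    have hgb : ∀ jj, jj ≤ i + 1 → ∀ m : ℤ, 0 ≤ m → S.mul m (g d) (b jj) = 0 := by
      intro jj hjj m hm
      exact S.flip_ge (g d) (b jj) (by rw [hptb]; ring) 0 le_rfl
        (hbjg jj hjj) m hm
    have hgs0 : ∀ m : ℤ, 0 ≤ m → S.mul m (g d) s = 0 := by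
      intro m hm
      exact S.flip_ge (g d) s (by rw [hptS]; ring) 0 le_rfl
        (hsg d le_rfl) m hm
    have hgsflip : S.mul (-1) (g d) s = S.mul (-1) s (g d) :=
      S.flip_neg_one (g d) s (by rw [hptS]; ring) (hsg d le_rfl)
    have hgX : ∀ jj, jj ≤ i + 1 → ∀ m : ℤ,
        S.mul m (g d) (S.mul (-1) (b jj) s)
          = S.mul (-1) (b jj) (S.mul m (g d) s) := by
      intro jj hjj m
      rw [S.commL (g d) (b jj) s m (hptb jj)
        (fun j hj => hgb jj hjj (j : ℤ) (Int.natCast_nonneg j)),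
        hgb jj hjj 0 le_rfl]
      simp
    have hTs : S.T s = γp • (S.mul (-1) (b i) s) - γp • (S.mul (-1) (b (i+1)) s) := by
      rw [hTS i hi1 (by omega)]
      rw [show Brt b n i = b i - b (i+1) from if_neg (by omega : ¬ i = n)]
      rw [map_sub (S.mul (-1)) (b i) (b (i+1)), LinearMap.sub_apply, smul_sub]
    have hgTs0 : ∀ m : ℤ, 0 ≤ m → S.mul m (g d) (S.T s) = 0 := by
      intro m hm
      rw [hTs, map_sub, map_smul, map_smul, hgX i (by omega) m,
        hgX (i+1) le_rfl m, hgs0 m hm]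
      simp
    have hgTsm1 : S.mul (-1) (g d) (S.T s)
        = γp • (S.mul (-1) (b i) (S.mul (-1) s (g d)))
          - γp • (S.mul (-1) (b (i+1)) (S.mul (-1) s (g d))) := by
      rw [hTs, map_sub, map_smul, map_smul, hgX i (by omega) (-1),
        hgX (i+1) le_rfl (-1), hgsflip]
    have hD : S.mul (-1) (S.T s) (g d)
        = γp • (S.mul (-1) (b i) (S.mul (-1) s (g d)))
          - γp • (S.mul (-1) (b (i+1)) (S.mul (-1) s (g d))) := by
      rw [S.skew' (S.T s) (g d) (by rw [S.pt_T, hptS]; ring) (-1),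
        finsum_eq_single _ 0 ?side2]
      · rw [← hgTsm1]; norm_num
      case side2 =>
        intro j hj
        rw [hgTs0 (-1 + (j:ℤ)) (by omega)]
        simp
    have hMD : S.mul (-2) s (g d) = S.mul (-1) (S.T s) (g d) := by
      have h := S.T_left s (g d) (-1)
      norm_num at h
      exact h.symm
    have hBsB : S.mul (-1) s (S.mul (-1) (b (i+1)) (g d))
        = S.mul (-1) (b (i+1)) (S.mul (-1) s (g d))
          + γp • S.mul (-1) (S.T s) (g d) := by
      have h := S.commL (b (i+1)) s (g d) (-1) (hptS i)
        (fun j hj => hbSpos i (i+1) (j:ℤ) (by exact_mod_cast hj))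
      rw [hbS0 i (i+1) hi1 (by omega) (by omega) (by omega)] at h
      rw [if_neg (by omega : ¬ i + 1 = i), if_pos ⟨rfl, by omega⟩] at h
      rw [show (γp * ((0:ℂ) - 1)) = -γp by ring] at h
      rw [map_smul (S.mul (-1-1)), LinearMap.smul_apply] at h
      rw [show (-1 - 1 : ℤ) = -2 by ring, hMD] at h
      rw [h]; module
    have hidx1 : n - d = i + 1 := by omega
    have hidx2 : n - (d+1) = i := by omega
    have q1 : S.mul 0 s (g (d+1)) = γp • S.mul (-1) s (g d) := by
      rw [hgsucc d, hidx1, map_add, map_smul, S.mulT0,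
        S.commL s (b (i+1)) (g d) 0 (hptb (i+1)) (hsb1 (i+1)),
        hsg d le_rfl 0 le_rfl, hsb0 (i+1) (by omega) (by omega),
        if_neg (by omega : ¬ i + 1 = i), if_pos ⟨rfl, by omega⟩]
      rw [show (-(γp * ((0:ℂ) - 1))) = γp by ring]
      rw [map_smul (S.mul (0-1)), LinearMap.smul_apply,
        show (0 - 1 : ℤ) = -1 by ring]
      simp
    have q2 : S.mul 0 s (g (d+1+1)) = 0 := by
      rw [hgsucc (d+1), hidx2, map_add, map_smul, S.mulT0,
        S.commL s (b i) (g (d+1)) 0 (hptb i) (hsb1 i), q1,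
        hsb0 i hi1 (by omega),
        if_pos rfl, if_neg (by rintro ⟨h,_⟩; omega : ¬ (i = i + 1 ∧ i ≠ n))]
      rw [show (-(γp * ((1:ℂ) - 0))) = -γp by ring]
      rw [map_smul (S.mul (0-1)), LinearMap.smul_apply,
        show (0 - 1 : ℤ) = -1 by ring]
      rw [hgsucc d, hidx1]
      rw [map_add (S.mul (-1) s), map_smul (S.mul (-1) s), hBsB]
      rw [map_smul (S.T), S.T_der s (g d) (-1)]
      rw [map_smul (S.mul (-1) (b i))]
      set D := S.mul (-1) (S.T s) (g d) with hDdef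
      set P := S.mul (-1) s (g d) with hPdef
      set Bst := S.mul (-1) s (S.T (g d)) with hBstdef
      set Ai := S.mul (-1) (b i) P with hAidef
      set Ai1 := S.mul (-1) (b (i+1)) P with hAi1def
      have hkey : γp • Ai - γp • Ai1 = D := by rw [hD]
      calc γ • (γp • (D + Bst)) + (γp • Ai + (-γp) • (γ • Bst + (Ai1 + γp • D)))
          = (γ * γp - γp * γp) • D + (γp • Ai - γp • Ai1) := by module
        _ = (γ * γp - γp * γp) • D + D := by rw [hkey]
        _ = (γ * γp - γp * γp + 1) • D := by module
        _ = (0 : ℂ) • D := by rw [hsc]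
        _ = 0 := zero_smul ℂ D
    have qfinal : ∀ t : ℕ, d + 2 + t ≤ n → S.mul 0 s (g (d + 2 + t)) = 0 := by
      intro t
      induction t with
      | zero => intro _; exact q2
      | succ t ih =>
        intro ht
        have hl1 : 1 ≤ n - (d + 2 + t) := by omega
        have hl2 : n - (d + 2 + t) ≤ n := by omega
        rw [show d + 2 + (t + 1) = (d + 2 + t) + 1 by ring, hgsucc (d+2+t),
          map_add, map_smul, S.mulT0, ih (by omega),
          S.commL s (b (n - (d+2+t))) (g (d+2+t)) 0 (hptb _) (hsb1 _),
          ih (by omega), hsb0 _ hl1 hl2,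
          if_neg (by omega : ¬ n - (d+2+t) = i),
          if_neg (by rintro ⟨h, _⟩; omega : ¬ (n - (d+2+t) = i + 1 ∧ i ≠ n))]
        simp
    have hnn : n = d + 2 + (i - 1) := by omega
    have := qfinal (i-1) (by omega)
    rw [← hnn] at this
    exact this
  -- PART 2
  refine ⟨part1, ?_⟩
  set s := Sα n with hsdef
  set W := S.mul (-1) s Ψ with hWdef
  have hsb1 : ∀ l, ∀ j : ℕ, 1 ≤ j → S.mul (j : ℤ) s (b l) = 0 := by
    intro l j hj
    exact S.flip_ge s (b l) (by rw [hptS]; ring) 1 (by norm_num)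
      (fun mm hmm => hbSpos n l mm hmm) (j : ℤ) (by exact_mod_cast hj)
  have hsΨ : ∀ m : ℤ, 0 ≤ m → S.mul m s Ψ = 0 := by
    intro m hm
    exact S.flip_ge s Ψ (by rw [hptS]; ring) 0 le_rfl
      (fun mm hmm => hΨS n mm hmm) m hm
  have hΨm1 : S.mul (-1) Ψ Ψ = 0 := by
    have h := S.skew Ψ Ψ (-1)
    rw [hptΨ, finsum_eq_single _ 0 ?sideA] at h
    case sideA =>
      intro j hj
      have hj2 : j = 1 ∨ 2 ≤ j := by omega
      rcases hj2 with h1 | h2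
      · rw [h1]; norm_num [S.T_vac, hΨΨ0]
      · rw [hΨΨn (-1 + (j:ℤ)) (by omega)]; simp
    norm_num [show ZMod.val ((1:ZMod 2)*1) = 1 from rfl, show ZMod.val (1:ZMod 2) = 1 from rfl] at h
    have h2 : (2:ℂ) • S.mul (-1) Ψ Ψ = 0 := by
      rw [two_smul]
      exact add_eq_zero_iff_eq_neg.mpr h
    have := congrArg (fun y => ((2:ℂ)⁻¹) • y) h2
    simpa [smul_smul] using this
  have p4z : S.mul 0 Ψ W = s := by
    rw [hWdef, S.commL Ψ s Ψ 0 (hptS n)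
      (fun j hj => hΨS n (j:ℤ) (Int.natCast_nonneg j)),
      hΨΨ0, hΨS n 0 le_rfl, S.vac_right]
    simp
  have p4p : ∀ k : ℤ, 1 ≤ k → S.mul k Ψ W = 0 := by
    intro k hk
    rw [hWdef, S.commL Ψ s Ψ k (hptS n)
      (fun j hj => hΨS n (j:ℤ) (Int.natCast_nonneg j)),
      hΨΨn k hk, hΨS n 0 le_rfl]
    simp
  have p4m : S.mul (-1) Ψ W = 0 := by
    rw [hWdef, S.commL Ψ s Ψ (-1) (hptS n)
      (fun j hj => hΨS n (j:ℤ) (Int.natCast_nonneg j)),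
      hΨm1, hΨS n 0 le_rfl]
    simp
  have p5a : ∀ l, 1 ≤ l → l ≤ n →
      S.mul 0 (b l) W = ((γp * (if l = n then 1 else 0))) • W := by
    intro l hl1 hl2
    rw [hWdef, S.commL (b l) s Ψ 0 (hptS n)
      (fun j hj => hbSpos n l (j:ℤ) (by exact_mod_cast hj)),
      hbΨ l 0 le_rfl, hbS0 n l hn le_rfl hl1 hl2,
      if_neg (by rintro ⟨h,hne⟩; exact hne rfl : ¬ (l = n + 1 ∧ n ≠ n))]
    rw [map_smul (S.mul (0-1)), LinearMap.smul_apply,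
      show (0 - 1 : ℤ) = -1 by ring]
    simp
    rfl
  have p5b : ∀ l, 1 ≤ l → l ≤ n → ∀ k : ℤ, 1 ≤ k → S.mul k (b l) W = 0 := by
    intro l hl1 hl2 k hk
    rw [hWdef, S.commL (b l) s Ψ k (hptS n)
      (fun j hj => hbSpos n l (j:ℤ) (by exact_mod_cast hj)),
      hbΨ l k (by omega), hbS0 n l hn le_rfl hl1 hl2,
      if_neg (by rintro ⟨h,hne⟩; exact hne rfl : ¬ (l = n + 1 ∧ n ≠ n))]
    rw [map_smul (S.mul (k-1)), LinearMap.smul_apply, hsΨ (k-1) (by omega)]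
    simp
  have p7a : ∀ l, 1 ≤ l → l ≤ n →
      S.mul 0 W (b l) = (-(γp * (if l = n then 1 else 0))) • W := by
    intro l hl1 hl2
    rw [S.flip_zero_eq W (b l) (by rw [hptb]; ring) (fun mm hmm => p5b l hl1 hl2 mm hmm),
      p5a l hl1 hl2, neg_smul]
  have p7b : ∀ l, 1 ≤ l → l ≤ n → ∀ j : ℕ, 1 ≤ j → S.mul (j:ℤ) W (b l) = 0 := by
    intro l hl1 hl2 j hj
    exact S.flip_ge W (b l) (by rw [hptb]; ring) 1 (by norm_num)
      (fun mm hmm => p5b l hl1 hl2 mm hmm) (j:ℤ) (by exact_mod_cast hj)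
  set κ := ((-1:ℂ) ^ ((S.pt W * S.pt Ψ).val)) with hκdef
  have p6a : S.mul 0 W Ψ = (-κ) • s := by
    have h := S.skew W Ψ 0
    rw [finsum_eq_single _ 0 ?sideB] at h
    case sideB =>
      intro j hj
      rw [p4p (0 + (j:ℤ)) (by omega)]
      simp
    rw [← hκdef] at h
    norm_num [p4z] at h
    rw [h]; module
  have p6b : S.mul (-1) W Ψ = (-κ) • S.T s := by
    have h := S.skew W Ψ (-1)
    rw [finsum_eq_single _ 1 ?sideC] at h
    case sideC =>
      intro j hj
      rcases Nat.eq_zero_or_pos j with h0 | h1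
      · rw [h0]; norm_num [p4m]
      · rw [p4p (-1 + (j:ℤ)) (by omega)]; simp
    rw [← hκdef] at h
    norm_num [p4z] at h
    rw [h]; module
  have hTsn : S.T s = γp • S.mul (-1) (b n) s := by
    rw [hTS n hn le_rfl, show Brt b n n = b n from if_pos rfl]
  have q1 : S.mul 0 W (g 1) = 0 := by
    have e1 : g 1 = γ • S.T Ψ + S.mul (-1) (b n) Ψ := by
      rw [show (1:ℕ) = 0 + 1 from rfl, hgsucc 0]
      norm_num
      rfl
    rw [e1, map_add, map_smul, S.mulT0, p6a,
      S.commL W (b n) Ψ 0 (hptb n) (p7b n hn le_rfl), p6a,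
      p7a n hn le_rfl, if_pos rfl]
    rw [show (-(γp * (1:ℂ))) = -γp by ring]
    rw [map_smul (S.mul (0-1)), LinearMap.smul_apply,
      show (0 - 1 : ℤ) = -1 by ring, p6b]
    rw [map_smul S.T, map_smul (S.mul (-1) (b n)), hTsn]
    set X := S.mul (-1) (b n) s with hXdef
    calc γ • (-κ) • (γp • X) + ((-κ) • X + (-γp) • (-κ) • (γp • X))
        = (κ * (-(γ * γp - γp * γp + 1))) • X := by module
      _ = (κ * (-(0:ℂ))) • X := by rw [hsc]
      _ = 0 := by norm_num
  have qsteps : ∀ k, k ≤ n → 1 ≤ k → S.mul 0 W (g k) = 0 := by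
    intro k
    induction k with
    | zero => intro _ h; omega
    | succ k ih =>
      intro hk _
      rcases Nat.eq_zero_or_pos k with h0 | h1
      · rw [h0]; exact q1
      · have hl1 : 1 ≤ n - k := by omega
        have hl2 : n - k ≤ n := by omega
        have hln : ¬ (n - k = n) := by omega
        rw [hgsucc k, map_add, map_smul, S.mulT0, ih (by omega) h1,
          S.commL W (b (n-k)) (g k) 0 (hptb _) (p7b (n-k) hl1 hl2),
          ih (by omega) h1, p7a (n-k) hl1 hl2, if_neg hln]
        rw [show (-(γp * (0:ℂ))) = 0 by ring, zero_smul]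
        simp
  exact qsteps n le_rfl hn
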